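/- Let σ_abs, σ_ems, N, ħω_s, ħω_p, τ > 0 and I_p, I_s ≥ 0, with ψ_ℓ^c = σ_ℓ^c I_ℓ/(ħω_ℓ) and g as the ytterbium steady-state gain. Then |I_s² · ∂²g/∂I_s²| ≤ 2√2 N (σ_ems + σ_abs). -/

import Mathlib

lemma yb_aux (C M c d s : ℝ) (hd : d ≠ 0) :
    s^2 * ((C * M) * (-(2*d^1*c) / (d^2)^2)) = (2*C*c*s^2/d^3) * (-M) := by
  field_simp

/-- Bound on `|I_s² ∂²g/∂I_s²|` for the ytterbium steady-state gain. -/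
theorem yb_gain_second_derivative_bound
    (σabs σems σpa σpe σsa σse N ωs ωp τ Ip : ℝ)
    (hσabs : 0 < σabs) (hσems : 0 < σems)
    (hσpa : 0 < σpa) (hσpe : 0 < σpe) (hσsa : 0 < σsa) (hσse : 0 < σse)
    (hN : 0 < N) (hωs : 0 < ωs) (hωp : 0 < ωp) (hτ : 0 < τ) (hIp : 0 ≤ Ip)
    (g : ℝ → ℝ)
    (hg : ∀ Is : ℝ, g Is =
      N * (σems + σabs) *
        ((σpa * Ip / ωp + σsa * Is / ωs) /
          (σpa * Ip / ωp + σpe * Ip / ωp + σsa * Is / ωs + σse * Is / ωs + 1 / τ))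
      - σabs * N) :
    ∀ Is : ℝ, 0 ≤ Is →
      |Is ^ 2 * deriv (deriv g) Is| ≤ 2 * Real.sqrt 2 * N * (σems + σabs) := by
  intro Is hIs
  set A : ℝ := σpa * Ip / ωp with hAdef
  set P : ℝ := σpa * Ip / ωp + σpe * Ip / ωp + 1/τ with hPdef
  set b : ℝ := σsa / ωs with hbdef
  set c : ℝ := σsa / ωs + σse / ωs with hcdef
  set C : ℝ := N * (σems + σabs) with hCdef
  have hA0 : 0 ≤ A := by positivity
  have hP0 : 0 < P := by positivity
  have hb0 : 0 < b := by positivity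
  have hc0 : 0 < c := by positivity
  have hbc : b ≤ c := by
    have : 0 ≤ σse / ωs := by positivity
    simp only [hbdef, hcdef]; linarith
  have hAP : A ≤ P := by
    have h1 : 0 ≤ σpe * Ip / ωp := by positivity
    have h2 : 0 < 1/τ := by positivity
    simp only [hAdef, hPdef]; linarith
  have hC0 : 0 < C := by positivity
  have hgf : g = fun x => C * ((A + b*x)/(P + c*x)) - σabs*N := by
    funext x
    rw [hg x]
    have hnum : σpa * Ip / ωp + σsa * x / ωs = A + b*x := by
      simp only [hAdef, hbdef]; ring
    have hden : σpa * Ip / ωp + σpe * Ip / ωp + σsa * x / ωs + σse * x / ωs + 1/τ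
        = P + c*x := by
      simp only [hPdef, hcdef]; ring
    rw [hnum, hden]
  have hder1 : ∀ x : ℝ, 0 < P + c*x →
      HasDerivAt (fun y => C * ((A + b*y)/(P + c*y)) - σabs*N)
        (C * ((b*P - A*c)/(P+c*x)^2)) x := by
    intro x hx
    have h1 : HasDerivAt (fun y : ℝ => A + b*y) b x := by
      simpa using ((hasDerivAt_id x).const_mul b).const_add A
    have h2 : HasDerivAt (fun y : ℝ => P + c*y) c x := by
      simpa using ((hasDerivAt_id x).const_mul c).const_add P
    have h3 := (h1.div h2 (ne_of_gt hx)).const_mul C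
    have h4 := h3.sub_const (σabs*N)
    refine h4.congr_deriv ?_
    have h5 : b * (P + c*x) - (A + b*x)*c = b*P - A*c := by ring
    rw [h5]
  have hIsden : 0 < P + c*Is := by nlinarith [mul_nonneg hc0.le hIs]
  have hU : IsOpen {x : ℝ | 0 < P + c*x} :=
    isOpen_lt continuous_const (by continuity)
  have hUIs : {x : ℝ | 0 < P + c*x} ∈ nhds Is := hU.mem_nhds hIsden
  have hgderiv : ∀ x : ℝ, 0 < P + c*x →
      deriv g x = C * ((b*P - A*c)/(P+c*x)^2) := by
    intro x hx
    rw [hgf]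
    exact (hder1 x hx).deriv
  have hev : deriv g =ᶠ[nhds Is] (fun x => C * ((b*P - A*c)/(P+c*x)^2)) :=
    Filter.eventuallyEq_of_mem hUIs (fun x hx => hgderiv x hx)
  have hfun : (fun x : ℝ => C * ((b*P - A*c)/(P+c*x)^2))
      = fun x => (C * (b*P - A*c)) * ((P+c*x)^2)⁻¹ := by
    funext x; ring
  have h2den : HasDerivAt (fun y : ℝ => (P + c*y)^2) (2*(P+c*Is)^1*c) Is := by
    have h2 : HasDerivAt (fun y : ℝ => P + c*y) c Is := by
      simpa using ((hasDerivAt_id Is).const_mul c).const_add P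
    simpa using h2.fun_pow 2
  have h2inv := (h2den.inv (by positivity)).const_mul (C * (b*P - A*c))
  have hderiv2 : deriv (deriv g) Is
      = (C * (b*P - A*c)) * (-(2*(P+c*Is)^1*c) / ((P+c*Is)^2)^2) := by
    rw [hev.deriv_eq, hfun]
    exact h2inv.deriv
  have heq : Is^2 * deriv (deriv g) Is
      = (2*C*c*Is^2/(P+c*Is)^3) * (A*c - b*P) := by
    rw [hderiv2, show A*c - b*P = -(b*P - A*c) by ring]
    exact yb_aux C (b*P - A*c) c (P+c*Is) Is (ne_of_gt hIsden)
  have hkey : (c*Is)^2 * P ≤ (P + c*Is)^3 := by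
    have hx0 : 0 ≤ c*Is := mul_nonneg hc0.le hIs
    have h1 : 0 ≤ P^3 + 3*P^2*(c*Is) + 2*P*(c*Is)^2 + (c*Is)^3 := by positivity
    have h2 : (P + c*Is)^3 - (c*Is)^2 * P
        = P^3 + 3*P^2*(c*Is) + 2*P*(c*Is)^2 + (c*Is)^3 := by ring
    linarith
  have habs : |A*c - b*P| ≤ c*P := by
    rw [abs_le]
    constructor
    · have hbP : b*P ≤ c*P := mul_le_mul_of_nonneg_right hbc hP0.le
      have h0 : 0 ≤ A*c := mul_nonneg hA0 hc0.le
      linarith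
    · have hAc : A*c ≤ P*c := mul_le_mul_of_nonneg_right hAP hc0.le
      have h0 : 0 ≤ b*P := mul_nonneg hb0.le hP0.le
      have hcomm : P*c = c*P := mul_comm P c
      linarith
  have hfac : 0 ≤ 2*C*c*Is^2/(P+c*Is)^3 := by positivity
  have hsqrt2 : (1:ℝ) ≤ Real.sqrt 2 := by
    rw [show (1:ℝ) = Real.sqrt 1 by simp]
    exact Real.sqrt_le_sqrt (by norm_num)
  calc |Is^2 * deriv (deriv g) Is|
      = (2*C*c*Is^2/(P+c*Is)^3) * |A*c - b*P| := by
        rw [heq, abs_mul, abs_of_nonneg hfac]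
    _ ≤ (2*C*c*Is^2/(P+c*Is)^3) * (c*P) := mul_le_mul_of_nonneg_left habs hfac
    _ ≤ 2*C := by
        rw [div_mul_eq_mul_div, div_le_iff₀ (by positivity : (0:ℝ) < (P+c*Is)^3)]
        have h1 := mul_le_mul_of_nonneg_left hkey (by positivity : (0:ℝ) ≤ 2*C)
        have h2 : 2*C*c*Is^2*(c*P) = 2*C*((c*Is)^2*P) := by ring
        linarith
    _ ≤ 2 * Real.sqrt 2 * N * (σems + σabs) := by
        have h1 := mul_le_mul_of_nonneg_right hsqrt2 (by positivity : (0:ℝ) ≤ 2*C)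
        have h2 : Real.sqrt 2 * (2*C) = 2*Real.sqrt 2*C := by ring
        have h3 : 2*C ≤ 2*Real.sqrt 2*C := by linarith
        calc (2:ℝ)*C ≤ 2*Real.sqrt 2*C := h3
          _ = 2 * Real.sqrt 2 * N * (σems + σabs) := by rw [hCdef]; ring
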